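/- If u : ℝ^n → ℝ is the quadratic polynomial u(x) = xᵀAx for a positive definite symmetric matrix A, then the reverse isoperimetric quantity I(u) = liminf_{t→∞} (∫_{Ω_t} |Du|) / (∫_{Ω_t} |t - u|^{n/(n-1)})^{(n-1)/n} is finite, where Ω_t = {x : u(x) < t}. -/

import Mathlib

open MeasureTheory Filter Set

lemma coord_le_norm {n : ℕ} (y : EuclideanSpace ℝ (Fin n)) (i : Fin n) : |y i| ≤ ‖y‖ := by
  rw [EuclideanSpace.norm_eq, ← Real.sqrt_sq_eq_abs]
  apply Real.sqrt_le_sqrt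
  have := Finset.single_le_sum (f := fun j => ‖y j‖ ^ 2) (fun j _ => sq_nonneg _)
    (Finset.mem_univ i)
  simpa [Real.norm_eq_abs, sq_abs] using this

noncomputable def quadDeriv {n : ℕ} (A : Matrix (Fin n) (Fin n) ℝ)
    (x : EuclideanSpace ℝ (Fin n)) : EuclideanSpace ℝ (Fin n) →L[ℝ] ℝ :=
  ∑ i, ∑ j, A i j • (x i • EuclideanSpace.proj j + x j • EuclideanSpace.proj i)

set_option maxHeartbeats 1000000 in
lemma quad_hasFDerivAt {n : ℕ} (A : Matrix (Fin n) (Fin n) ℝ)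
    (x : EuclideanSpace ℝ (Fin n)) :
    HasFDerivAt (fun x : EuclideanSpace ℝ (Fin n) => ∑ i, ∑ j, A i j * x i * x j)
      (quadDeriv A x) x := by
  apply HasFDerivAt.fun_sum
  intro i _
  apply HasFDerivAt.fun_sum
  intro j _
  have h1' : HasFDerivAt (fun y : EuclideanSpace ℝ (Fin n) =>
      EuclideanSpace.proj i y * EuclideanSpace.proj j y)
      (EuclideanSpace.proj i x • EuclideanSpace.proj j
        + EuclideanSpace.proj j x • EuclideanSpace.proj i) x :=
    HasFDerivAt.mul (𝕜 := ℝ)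
      ((EuclideanSpace.proj (𝕜 := ℝ) i).hasFDerivAt (x := x))
      ((EuclideanSpace.proj (𝕜 := ℝ) j).hasFDerivAt (x := x))
  have h1 : HasFDerivAt (fun y : EuclideanSpace ℝ (Fin n) => y i * y j)
      (x i • EuclideanSpace.proj j + x j • EuclideanSpace.proj i) x := h1'
  simpa [mul_assoc] using h1.const_mul (A i j)

lemma quadDeriv_apply {n : ℕ} (A : Matrix (Fin n) (Fin n) ℝ)
    (x y : EuclideanSpace ℝ (Fin n)) :
    quadDeriv A x y = ∑ i, ∑ j, A i j * (x i * y j + x j * y i) := by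
  unfold quadDeriv
  simp [ContinuousLinearMap.sum_apply, ContinuousLinearMap.smul_apply,
    ContinuousLinearMap.add_apply, mul_add]

lemma quadDeriv_norm_le {n : ℕ} (A : Matrix (Fin n) (Fin n) ℝ)
    (x : EuclideanSpace ℝ (Fin n)) :
    ‖quadDeriv A x‖ ≤ (2 * ∑ i, ∑ j, |A i j|) * ‖x‖ := by
  have hC : 0 ≤ (2 * ∑ i, ∑ j, |A i j|) * ‖x‖ := by positivity
  refine ContinuousLinearMap.opNorm_le_bound _ hC fun y => ?_
  rw [quadDeriv_apply, Real.norm_eq_abs]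
  calc |∑ i, ∑ j, A i j * (x i * y j + x j * y i)|
      ≤ ∑ i, ∑ j, |A i j * (x i * y j + x j * y i)| := by
        refine (Finset.abs_sum_le_sum_abs _ _).trans (Finset.sum_le_sum fun i _ =>
          Finset.abs_sum_le_sum_abs _ _)
    _ ≤ ∑ i, ∑ j, |A i j| * (2 * (‖x‖ * ‖y‖)) := by
        refine Finset.sum_le_sum fun i _ => Finset.sum_le_sum fun j _ => ?_
        rw [abs_mul]
        refine mul_le_mul_of_nonneg_left ?_ (abs_nonneg _)
        refine (abs_add_le _ _).trans ?_
        rw [abs_mul, abs_mul]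
        have h1 := mul_le_mul (coord_le_norm x i) (coord_le_norm y j)
          (abs_nonneg _) (norm_nonneg _)
        have h2 := mul_le_mul (coord_le_norm x j) (coord_le_norm y i)
          (abs_nonneg _) (norm_nonneg _)
        nlinarith
    _ = (2 * ∑ i, ∑ j, |A i j|) * ‖x‖ * ‖y‖ := by
        simp only [← Finset.sum_mul]
        ring

lemma quad_eq_dot {n : ℕ} (A : Matrix (Fin n) (Fin n) ℝ) (x : EuclideanSpace ℝ (Fin n)) :
    (∑ i, ∑ j, A i j * x i * x j)
      = dotProduct (star fun i => x i) (A.mulVec fun i => x i) := by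
  simp only [dotProduct, Matrix.mulVec, Pi.star_apply, star_trivial, Finset.mul_sum]
  exact Finset.sum_congr rfl fun i _ => Finset.sum_congr rfl fun j _ => by ring

lemma quad_smul {n : ℕ} (A : Matrix (Fin n) (Fin n) ℝ) (a : ℝ) (x : EuclideanSpace ℝ (Fin n)) :
    (∑ i, ∑ j, A i j * (a • x) i * (a • x) j) = a ^ 2 * ∑ i, ∑ j, A i j * x i * x j := by
  simp only [PiLp.smul_apply, smul_eq_mul, Finset.mul_sum]
  exact Finset.sum_congr rfl fun i _ => Finset.sum_congr rfl fun j _ => by ring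

lemma quad_continuous {n : ℕ} (A : Matrix (Fin n) (Fin n) ℝ) :
    Continuous (fun x : EuclideanSpace ℝ (Fin n) => ∑ i, ∑ j, A i j * x i * x j) := by
  refine continuous_finset_sum _ fun i _ => continuous_finset_sum _ fun j _ => ?_
  exact (continuous_const.mul (EuclideanSpace.proj (𝕜 := ℝ) i).continuous).mul
    (EuclideanSpace.proj (𝕜 := ℝ) j).continuous

lemma quad_upper {n : ℕ} (A : Matrix (Fin n) (Fin n) ℝ) (x : EuclideanSpace ℝ (Fin n)) :
    (∑ i, ∑ j, A i j * x i * x j) ≤ (∑ i, ∑ j, |A i j|) * ‖x‖ ^ 2 := by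
  calc (∑ i, ∑ j, A i j * x i * x j) ≤ ∑ i, ∑ j, |A i j * x i * x j| :=
        Finset.sum_le_sum fun i _ => Finset.sum_le_sum fun j _ => le_abs_self _
    _ ≤ ∑ i, ∑ j, |A i j| * ‖x‖ ^ 2 := by
        refine Finset.sum_le_sum fun i _ => Finset.sum_le_sum fun j _ => ?_
        rw [abs_mul, abs_mul, mul_assoc, pow_two]
        exact mul_le_mul_of_nonneg_left
          (mul_le_mul (coord_le_norm x i) (coord_le_norm x j) (abs_nonneg _) (norm_nonneg _))
          (abs_nonneg _)
    _ = (∑ i, ∑ j, |A i j|) * ‖x‖ ^ 2 := by simp only [← Finset.sum_mul]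

lemma quad_lower {n : ℕ} (hn : 2 ≤ n) (A : Matrix (Fin n) (Fin n) ℝ) (hA : A.PosDef) :
    ∃ m : ℝ, 0 < m ∧ ∀ x : EuclideanSpace ℝ (Fin n),
      m * ‖x‖ ^ 2 ≤ ∑ i, ∑ j, A i j * x i * x j := by
  have hne : (Metric.sphere (0 : EuclideanSpace ℝ (Fin n)) 1).Nonempty := by
    haveI : Nontrivial (EuclideanSpace ℝ (Fin n)) := by
      have : Nonempty (Fin n) := ⟨⟨0, by omega⟩⟩
      infer_instance
    exact NormedSpace.sphere_nonempty.mpr zero_le_one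
  obtain ⟨x₀, hx₀s, hx₀min⟩ := (isCompact_sphere (0 : EuclideanSpace ℝ (Fin n)) 1).exists_isMinOn
    hne (quad_continuous A).continuousOn
  have hx₀norm : ‖x₀‖ = 1 := by simpa using hx₀s
  have hx₀ne : x₀ ≠ 0 := by
    intro h; rw [h] at hx₀norm; simp at hx₀norm
  have hm0 : (0:ℝ) < ∑ i, ∑ j, A i j * x₀ i * x₀ j := by
    rw [quad_eq_dot A x₀]
    exact hA.dotProduct_mulVec_pos (x := fun i => x₀ i) (fun h => hx₀ne (by ext i; exact congrFun h i))
  refine ⟨_, hm0, fun x => ?_⟩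
  rcases eq_or_ne x 0 with rfl | hx
  · simp
  · have hnx : (0:ℝ) < ‖x‖ := norm_pos_iff.mpr hx
    have hys : ‖x‖⁻¹ • x ∈ Metric.sphere (0 : EuclideanSpace ℝ (Fin n)) 1 := by
      simp [norm_smul, abs_of_pos (inv_pos.mpr hnx), inv_mul_cancel₀ hnx.ne']
    have hmin := hx₀min hys
    simp only [Set.mem_setOf_eq] at hmin
    have hfx : (∑ i, ∑ j, A i j * x i * x j)
        = ‖x‖ ^ 2 * ∑ i, ∑ j, A i j * (‖x‖⁻¹ • x) i * (‖x‖⁻¹ • x) j := by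
      conv_lhs => rw [show x = ‖x‖ • (‖x‖⁻¹ • x) by rw [smul_inv_smul₀ hnx.ne']]
      exact quad_smul A ‖x‖ (‖x‖⁻¹ • x)
    rw [hfx]
    have h2 : (0:ℝ) < ‖x‖ ^ 2 := by positivity
    nlinarith

lemma quad_gradient_norm_le {n : ℕ} (A : Matrix (Fin n) (Fin n) ℝ)
    (x : EuclideanSpace ℝ (Fin n)) :
    ‖gradient (fun x : EuclideanSpace ℝ (Fin n) => ∑ i, ∑ j, A i j * x i * x j) x‖
      ≤ (2 * ∑ i, ∑ j, |A i j|) * ‖x‖ := by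
  rw [(quad_hasFDerivAt A x).hasGradientAt.gradient]
  rw [LinearIsometryEquiv.norm_map]
  exact quadDeriv_norm_le A x

set_option maxHeartbeats 2000000 in
theorem reverse_isoperimetric_of_quadratic (n : ℕ) (hn : 2 ≤ n)
    (A : Matrix (Fin n) (Fin n) ℝ) (hA : A.PosDef)
    (u : EuclideanSpace ℝ (Fin n) → ℝ)
    (hu : ∀ x, u x = ∑ i, ∑ j, A i j * x i * x j) :
    Filter.liminf (fun t : ℝ => ENNReal.ofReal
      ((∫ x in {x | u x < t}, ‖gradient u x‖) /
        (∫ x in {x | u x < t}, |t - u x| ^ ((n : ℝ) / (n - 1))) ^ (((n : ℝ) - 1) / n)))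
      Filter.atTop < ⊤ := by
  have hueq : u = fun x => ∑ i, ∑ j, A i j * x i * x j := funext hu
  subst hueq
  set f := fun x : EuclideanSpace ℝ (Fin n) => ∑ i, ∑ j, A i j * x i * x j with hf
  set c : ℝ := ∑ i, ∑ j, |A i j| with hc
  have hc0 : 0 ≤ c := Finset.sum_nonneg fun i _ => Finset.sum_nonneg fun j _ => abs_nonneg _
  set c1 : ℝ := c + 1 with hc1def
  have hc10 : 0 < c1 := by positivity
  obtain ⟨m, hm0, hml⟩ := quad_lower hn A hA
  have hcont : Continuous f := quad_continuous A
  have hup : ∀ x, f x ≤ c * ‖x‖ ^ 2 := fun x => quad_upper A x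
  have hgrad : ∀ x, ‖gradient f x‖ ≤ 2 * c * ‖x‖ := fun x => quad_gradient_norm_le A x
  have hf0 : ∀ x, 0 ≤ f x := fun x => le_trans (by positivity) (hml x)
  have hnR : (2:ℝ) ≤ (n:ℝ) := by exact_mod_cast hn
  have hn0 : (0:ℝ) < (n:ℝ) := by linarith
  have hn1 : (0:ℝ) < (n:ℝ) - 1 := by linarith
  set p : ℝ := (n : ℝ) / ((n:ℝ) - 1) with hp
  set q : ℝ := ((n : ℝ) - 1) / (n:ℝ) with hq
  set s : ℝ := ((n : ℝ) + 1) / 2 with hs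
  have hp0 : 0 < p := div_pos hn0 hn1
  have hq0 : 0 < q := div_pos hn1 hn0
  have hexp : (p + (n:ℝ) / 2) * q = s := by
    rw [hp, hq, hs]; field_simp; ring
  set b : ℝ := (volume (Metric.ball (0 : EuclideanSpace ℝ (Fin n)) 1)).toReal with hb
  have hb0 : 0 < b :=
    ENNReal.toReal_pos (Metric.measure_ball_pos volume 0 one_pos).ne' measure_ball_lt_top.ne
  set K1 : ℝ := 2 * c * b * (m⁻¹ ^ s) with hK1
  have hK10 : 0 ≤ K1 := by
    have : (0:ℝ) < m⁻¹ ^ s := Real.rpow_pos_of_pos (inv_pos.mpr hm0) s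
    positivity
  set K2 : ℝ := ((2:ℝ)⁻¹ ^ p) * (((2 * c1)⁻¹) ^ ((n:ℝ) / 2)) * b with hK2
  have hK20 : 0 < K2 := by
    have h1 : (0:ℝ) < (2:ℝ)⁻¹ ^ p := Real.rpow_pos_of_pos (by norm_num) p
    have h2 : (0:ℝ) < ((2 * c1)⁻¹) ^ ((n:ℝ) / 2) :=
      Real.rpow_pos_of_pos (by positivity) _
    positivity
  set C : ℝ := K1 / (K2 ^ q) with hC
  -- the main estimate
  have claim : ∀ t : ℝ, 1 ≤ t →
      (∫ x in {x | f x < t}, ‖gradient f x‖) /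
        (∫ x in {x | f x < t}, |t - f x| ^ p) ^ q ≤ C := by
    intro t ht
    have ht0 : (0:ℝ) < t := by linarith
    set Ω := {x : EuclideanSpace ℝ (Fin n) | f x < t} with hΩ
    set R : ℝ := Real.sqrt (t / m) with hR
    set r : ℝ := Real.sqrt (t / (2 * c1)) with hr
    have hR0 : 0 < R := Real.sqrt_pos.mpr (by positivity)
    have hr0 : 0 < r := Real.sqrt_pos.mpr (by positivity)
    have hΩball : Ω ⊆ Metric.ball 0 R := by
      intro x hx
      rw [mem_ball_zero_iff]
      have h1 : ‖x‖ ^ 2 < t / m := by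
        rw [lt_div_iff₀ hm0]
        have h2 := hml x
        have h3 : f x < t := hx
        nlinarith
      exact (Real.lt_sqrt (norm_nonneg x)).mpr h1
    have hballhalf : ∀ x ∈ Metric.ball (0 : EuclideanSpace ℝ (Fin n)) r, f x < t / 2 := by
      intro x hx
      rw [mem_ball_zero_iff] at hx
      have h1 : ‖x‖ ^ 2 < t / (2 * c1) := by
        have h2 : ‖x‖ ^ 2 < r ^ 2 := by nlinarith [norm_nonneg x]
        rwa [hr, Real.sq_sqrt (by positivity : (0:ℝ) ≤ t / (2 * c1))] at h2
      calc f x ≤ c * ‖x‖ ^ 2 := hup x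
        _ ≤ c1 * ‖x‖ ^ 2 := by nlinarith [sq_nonneg ‖x‖]
        _ < c1 * (t / (2 * c1)) := by
            exact mul_lt_mul_of_pos_left h1 hc10
        _ = t / 2 := by field_simp
    have hballΩ : Metric.ball (0 : EuclideanSpace ℝ (Fin n)) r ⊆ Ω := fun x hx => by
      have := hballhalf x hx
      show f x < t
      linarith
    have hmeasΩ : MeasurableSet Ω := (isOpen_lt hcont continuous_const).measurableSet
    have hfin : volume Ω < ⊤ :=
      lt_of_le_of_lt (measure_mono hΩball) measure_ball_lt_top
    -- volume bounds
    have hvol : ∀ ρ : ℝ, 0 < ρ →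
        (volume (Metric.ball (0 : EuclideanSpace ℝ (Fin n)) ρ)).toReal = ρ ^ n * b := by
      intro ρ hρ
      rw [Measure.addHaar_ball_of_pos volume 0 hρ, ENNReal.toReal_mul,
        ENNReal.toReal_ofReal (by positivity), finrank_euclideanSpace_fin]
    have hμΩ : (volume Ω).toReal ≤ R ^ n * b := by
      rw [← hvol R hR0]
      exact ENNReal.toReal_mono (lt_of_le_of_lt (le_refl _) measure_ball_lt_top).ne
        (measure_mono hΩball)
    -- numerator bound
    have hNbound : (∫ x in Ω, ‖gradient f x‖) ≤ 2 * c * R * (R ^ n * b) := by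
      have hb1 : ‖∫ x in Ω, ‖gradient f x‖‖ ≤ 2 * c * R * (volume Ω).toReal := by
        refine norm_setIntegral_le_of_norm_le_const hfin fun x hx => ?_
        rw [norm_norm]
        refine (hgrad x).trans ?_
        have hxR : ‖x‖ ≤ R := le_of_lt (by simpa [mem_ball_zero_iff] using hΩball hx)
        nlinarith
      calc (∫ x in Ω, ‖gradient f x‖) ≤ ‖∫ x in Ω, ‖gradient f x‖‖ := le_abs_self _
        _ ≤ 2 * c * R * (volume Ω).toReal := hb1
        _ ≤ 2 * c * R * (R ^ n * b) := by
            refine mul_le_mul_of_nonneg_left hμΩ (by positivity)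
    -- denominator bound
    set g := fun x : EuclideanSpace ℝ (Fin n) => |t - f x| ^ p with hg
    have hgc : Continuous g :=
      Continuous.rpow_const (continuous_const.sub hcont).abs (fun x => Or.inr hp0.le)
    have hInt : IntegrableOn g Ω volume := by
      refine (ContinuousOn.integrableOn_compact (isCompact_closedBall (0:EuclideanSpace ℝ (Fin n)) R)
        hgc.continuousOn).mono_set (hΩball.trans Metric.ball_subset_closedBall)
    have hDlb1 : (∫ x in Metric.ball (0 : EuclideanSpace ℝ (Fin n)) r, g x)
        ≤ ∫ x in Ω, g x := by
      refine setIntegral_mono_set hInt (Filter.Eventually.of_forall fun x => ?_)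
        (HasSubset.Subset.eventuallyLE hballΩ)
      have : 0 ≤ |t - f x| := abs_nonneg _
      positivity
    have hDlb2 : (t/2) ^ p * (volume (Metric.ball (0 : EuclideanSpace ℝ (Fin n)) r)).toReal
        ≤ ∫ x in Metric.ball (0 : EuclideanSpace ℝ (Fin n)) r, g x := by
      refine setIntegral_ge_of_const_le_real measurableSet_ball measure_ball_lt_top.ne
        (fun x hx => ?_) (hInt.mono_set hballΩ)
      have h1 := hballhalf x hx
      have h2 := hf0 x
      have h3 : t / 2 ≤ |t - f x| := by
        rw [abs_of_nonneg (by linarith)]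
        linarith
      exact Real.rpow_le_rpow (by positivity) h3 hp0.le
    have hDlb : (t/2) ^ p * (r ^ n * b) ≤ ∫ x in Ω, g x := by
      refine le_trans ?_ (le_trans hDlb2 hDlb1)
      rw [hvol r hr0]
    -- rewrite powers of t
    have hsqrt_pow : ∀ y : ℝ, 0 ≤ y → ∀ k : ℕ, Real.sqrt y ^ k = y ^ ((k:ℝ)/2) := by
      intro y hy k
      rw [Real.sqrt_eq_rpow, ← Real.rpow_natCast (y ^ ((1:ℝ)/2)) k, ← Real.rpow_mul hy]
      congr 1
      ring
    have hNt : (∫ x in Ω, ‖gradient f x‖) ≤ K1 * t ^ s := by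
      refine hNbound.trans ?_
      have h1 : 2 * c * R * (R ^ n * b) = 2 * c * b * R ^ (n + 1) := by ring
      rw [h1, hsqrt_pow (t/m) (by positivity) (n+1)]
      have h2 : ((n + 1 : ℕ) : ℝ) / 2 = s := by push_cast [hs]; ring
      rw [h2, div_eq_mul_inv, Real.mul_rpow ht0.le (by positivity), hK1]
      ring_nf
      exact le_refl _
    have hDt : K2 * t ^ (p + (n:ℝ)/2) ≤ ∫ x in Ω, g x := by
      refine le_trans (le_of_eq ?_) hDlb
      rw [hr, hsqrt_pow (t/(2*c1)) (by positivity) n]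
      rw [div_eq_mul_inv t (2:ℝ), Real.mul_rpow ht0.le (by norm_num),
        div_eq_mul_inv t (2*c1), Real.mul_rpow ht0.le (by positivity),
        Real.rpow_add ht0, hK2]
      ring
    have htpos : ∀ e : ℝ, 0 < t ^ e := fun e => Real.rpow_pos_of_pos ht0 e
    have hDq : K2 ^ q * t ^ s ≤ (∫ x in Ω, g x) ^ q := by
      have h := Real.rpow_le_rpow (by positivity) hDt hq0.le
      refine le_trans (le_of_eq ?_) h
      rw [Real.mul_rpow hK20.le (htpos _).le, ← Real.rpow_mul ht0.le, hexp]
    refine le_trans (div_le_div₀ (by positivity) hNt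
      (mul_pos (Real.rpow_pos_of_pos hK20 q) (htpos s)) hDq) ?_
    rw [hC, mul_div_mul_right _ _ (htpos s).ne']
  -- conclude
  have hev : ∀ᶠ t : ℝ in atTop, ENNReal.ofReal
      ((∫ x in {x | f x < t}, ‖gradient f x‖) /
        (∫ x in {x | f x < t}, |t - f x| ^ p) ^ q) ≤ ENNReal.ofReal C :=
    eventually_atTop.mpr ⟨1, fun t ht => ENNReal.ofReal_le_ofReal (claim t ht)⟩
  calc Filter.liminf (fun t : ℝ => ENNReal.ofReal
      ((∫ x in {x | f x < t}, ‖gradient f x‖) /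
        (∫ x in {x | f x < t}, |t - f x| ^ p) ^ q)) Filter.atTop
      ≤ Filter.liminf (fun _ : ℝ => ENNReal.ofReal C) Filter.atTop :=
        Filter.liminf_le_liminf hev
    _ = ENNReal.ofReal C := Filter.liminf_const _
    _ < ⊤ := ENNReal.ofReal_lt_top
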